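/- Let n ≥ 4 be an even integer and let α be a real number with 2/(n+1) ≤ α < 1. Then the set { α + (1−α)·√(1+z) : z ∈ 𝔻 } is contained in Ω_{nL} = φ_{nL}(𝔻). (Consequently SL*(α) = S*(α + (1−α)√(1+z)) is contained in S*_{nL}.) -/

import Mathlib

open Complex Metric Set

/-- The function φ_{nL}(z) = 1 + n z/(n+1) + z^n/(n+1). -/
noncomputable def phinL (n : ℕ) (z : ℂ) : ℂ :=
  1 + (n : ℂ) * z / ((n : ℂ) + 1) + z ^ n / ((n : ℂ) + 1)

/-- Ω_{nL} = φ_{nL}(𝔻), the image of the open unit disk. -/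
def OmeganL (n : ℕ) : Set ℂ := phinL n '' ball (0 : ℂ) 1

/-- f is analytic on the unit disk with f(0) = 0 and f'(0) = 1. -/
def IsNormalizedAnalytic (f : ℂ → ℂ) : Prop :=
  AnalyticOnNhd ℂ f (ball (0 : ℂ) 1) ∧ f 0 = 0 ∧ deriv f 0 = 1

/-- p is subordinate to ψ on the unit disk. -/
def Subord (p ψ : ℂ → ℂ) : Prop :=
  ∃ ω : ℂ → ℂ, AnalyticOnNhd ℂ ω (ball (0 : ℂ) 1) ∧ ω 0 = 0 ∧
    (∀ z ∈ ball (0 : ℂ) 1, ω z ∈ ball (0 : ℂ) 1) ∧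
    (∀ z ∈ ball (0 : ℂ) 1, p z = ψ (ω z))

/-- Membership in the class S*_{nL}. -/
def MemSnL (n : ℕ) (f : ℂ → ℂ) : Prop :=
  IsNormalizedAnalytic f ∧ (∀ z ∈ ball (0 : ℂ) 1, z ≠ 0 → f z ≠ 0) ∧
  Subord (fun z => if z = 0 then 1 else z * deriv f z / f z) (phinL n)

lemma phinL_zero (n : ℕ) (hn : 4 ≤ n) : phinL n 0 = 1 := by
  have hn0 : n ≠ 0 := by omega
  simp [phinL, zero_pow hn0]

lemma den_ne_zero (n : ℕ) : ((n : ℂ) + 1) ≠ 0 := by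
  have : ((n : ℂ) + 1) = ((n + 1 : ℕ) : ℂ) := by push_cast; ring
  rw [this]
  exact_mod_cast Nat.succ_ne_zero n

lemma ball_subset_OmeganL (n : ℕ) (hn : 4 ≤ n) :
    ball (1 : ℂ) (((n : ℝ) - 1) / ((n : ℝ) + 1)) ⊆ OmeganL n := by
  have hn' : (4 : ℝ) ≤ (n : ℝ) := by exact_mod_cast hn
  set r₀ : ℝ := ((n : ℝ) - 1) / ((n : ℝ) + 1) with hr₀def
  have hr₀ : 0 < r₀ := by
    apply div_pos <;> linarith
  have hden := den_ne_zero n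
  -- analyticity
  have hφa : AnalyticOnNhd ℂ (phinL n) (ball (0 : ℂ) 1) := by
    intro z _
    unfold phinL
    exact (analyticAt_const.add
      ((analyticAt_const.mul analyticAt_id).div analyticAt_const hden)).add
      ((analyticAt_id.pow n).div analyticAt_const hden)
  -- not constant
  have hnc : ¬ ∃ w, ∀ z ∈ ball (0 : ℂ) 1, phinL n z = w := by
    rintro ⟨w, hw⟩
    have h0 : phinL n 0 = w := hw 0 (by simp)
    have hhalf : ((1 : ℂ) / 2) ∈ ball (0 : ℂ) 1 := by
      rw [mem_ball_zero_iff]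
      norm_num
    have h1 : phinL n (1 / 2) = w := hw _ hhalf
    rw [phinL_zero n hn] at h0
    rw [← h0] at h1
    unfold phinL at h1
    have h6 : ((n : ℂ) * (1 / 2) + (1 / 2 : ℂ) ^ n) / ((n : ℂ) + 1) = 0 := by
      linear_combination h1
    have h2 : (n : ℂ) * (1 / 2) + (1 / 2 : ℂ) ^ n = 0 := by
      rcases div_eq_zero_iff.mp h6 with h | h
      · exact h
      · exact absurd h hden
    have h3 : (((n : ℝ) * (1 / 2) + (1 / 2 : ℝ) ^ n : ℝ) : ℂ) = 0 := by
      push_cast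
      linear_combination h2
    rw [Complex.ofReal_eq_zero] at h3
    have h4 : (0 : ℝ) < (n : ℝ) * (1 / 2) + (1 / 2 : ℝ) ^ n := by positivity
    linarith
  have hopen : IsOpen (OmeganL n) := by
    rcases hφa.is_constant_or_isOpen (convex_ball _ _).isPreconnected with h | h
    · exact absurd ⟨h.choose, h.choose_spec⟩ hnc
    · exact h _ subset_rfl isOpen_ball
  -- continuity
  have hcont : Continuous (phinL n) := by
    unfold phinL
    exact (continuous_const.add ((continuous_const.mul continuous_id).div_const _)).add
      ((continuous_pow n).div_const _)
  have hclosure : closure (OmeganL n) ⊆ phinL n '' closedBall (0 : ℂ) 1 := by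
    apply closure_minimal (image_mono ball_subset_closedBall)
    exact ((isCompact_closedBall (0 : ℂ) 1).image hcont).isClosed
  -- key step : points of the small ball in the closure of Ω are in Ω
  have key : ∀ x ∈ ball (1 : ℂ) r₀, x ∈ closure (OmeganL n) → x ∈ OmeganL n := by
    intro x hx hxc
    obtain ⟨w, hw, rfl⟩ := hclosure hxc
    rw [mem_closedBall_zero_iff] at hw
    rcases lt_or_eq_of_le hw with hw1 | hw1
    · exact ⟨w, mem_ball_zero_iff.mpr hw1, rfl⟩
    · exfalso
      have hnn : ‖((n : ℂ) + 1)‖ = (n : ℝ) + 1 := by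
        rw [show ((n : ℂ) + 1) = ((n + 1 : ℕ) : ℂ) by push_cast; ring, Complex.norm_natCast]
        push_cast; ring
      have hsub : phinL n w - 1 = ((n : ℂ) * w + w ^ n) / ((n : ℂ) + 1) := by
        unfold phinL; field_simp; ring
      have hnw : ‖(n : ℂ) * w‖ = (n : ℝ) := by
        rw [norm_mul, Complex.norm_natCast, hw1, mul_one]
      have hwn : ‖w ^ n‖ = 1 := by rw [norm_pow, hw1, one_pow]
      have hlow : (n : ℝ) - 1 ≤ ‖(n : ℂ) * w + w ^ n‖ := by
        have := norm_sub_le ((n : ℂ) * w + w ^ n) (w ^ n)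
        have heq : (n : ℂ) * w + w ^ n - w ^ n = (n : ℂ) * w := by ring
        rw [heq, hnw, hwn] at this
        linarith
      have hdist : r₀ ≤ dist (phinL n w) 1 := by
        rw [dist_eq_norm, hsub, norm_div, hnn, hr₀def]
        apply div_le_div_of_nonneg_right hlow ?_ |>.trans_eq rfl
        · linarith
      rw [mem_ball] at hx
      linarith
  -- connectedness argument
  intro x hx
  by_contra hxΩ
  have hxc : x ∉ closure (OmeganL n) := fun h => hxΩ (key x hx h)
  have hB : IsPreconnected (ball (1 : ℂ) r₀) := (convex_ball _ _).isPreconnected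
  have hone : (1 : ℂ) ∈ OmeganL n := ⟨0, by simp, phinL_zero n hn⟩
  obtain ⟨y, _, hyU, hyV⟩ := hB (OmeganL n) (closure (OmeganL n))ᶜ hopen
    isClosed_closure.isOpen_compl
    (fun y hy => by
      by_cases h : y ∈ closure (OmeganL n)
      · exact Or.inl (key y hy h)
      · exact Or.inr h)
    ⟨1, mem_ball_self hr₀, hone⟩ ⟨x, hx, hxc⟩
  exact hyV (subset_closure hyU)

theorem stmt5 (n : ℕ) (hn : 4 ≤ n) (hne : Even n) (α : ℝ)
    (hα1 : 2 / ((n : ℝ) + 1) ≤ α) (hα2 : α < 1) :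
    (fun z : ℂ => (α : ℂ) + (1 - (α : ℂ)) * (1 + z) ^ ((1 : ℂ) / 2)) '' ball (0 : ℂ) 1
      ⊆ OmeganL n := by
  have hn' : (4 : ℝ) ≤ (n : ℝ) := by exact_mod_cast hn
  rintro x ⟨z, hz, rfl⟩
  rw [mem_ball_zero_iff] at hz
  set s : ℂ := (1 + z) ^ ((1 : ℂ) / 2) with hs
  have h0 : (1 : ℂ) + z ≠ 0 := by
    intro h
    have : z = -1 := by linear_combination h
    rw [this] at hz
    simp at hz
  -- s * s = 1 + z
  have hs2 : s * s = 1 + z := by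
    rw [hs, ← Complex.cpow_add _ _ h0]
    norm_num
  -- Re s ≥ 0
  have hsre : 0 ≤ s.re := by
    rw [hs, Complex.cpow_def_of_ne_zero h0, Complex.exp_re]
    have him : (Complex.log (1 + z) * (1 / 2)).im = Complex.arg (1 + z) / 2 := by
      simp [Complex.mul_im, Complex.log_im]
      ring
    rw [him]
    have h1 := Complex.neg_pi_lt_arg (1 + z)
    have h2 := Complex.arg_le_pi (1 + z)
    have hcos : 0 ≤ Real.cos (Complex.arg (1 + z) / 2) :=
      Real.cos_nonneg_of_mem_Icc ⟨by linarith, by linarith⟩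
    positivity
  -- ‖s + 1‖ ≥ 1
  have hsp1 : 1 ≤ ‖s + 1‖ := by
    have h1 : (s + 1).re ≤ ‖s + 1‖ := Complex.re_le_norm _
    have h2 : (s + 1).re = s.re + 1 := by simp
    linarith
  -- ‖s - 1‖ ≤ ‖z‖
  have hprod : ‖s - 1‖ * ‖s + 1‖ = ‖z‖ := by
    rw [← norm_mul]
    congr 1
    linear_combination hs2
  have hsm1 : ‖s - 1‖ ≤ ‖z‖ := by
    nlinarith [norm_nonneg (s - 1), norm_nonneg z]
  -- conclude
  apply ball_subset_OmeganL n hn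
  rw [mem_ball, dist_eq_norm]
  have heq : (α : ℂ) + (1 - (α : ℂ)) * s - 1 = (1 - (α : ℂ)) * (s - 1) := by ring
  rw [heq, norm_mul]
  have h1a : ‖(1 : ℂ) - (α : ℂ)‖ = 1 - α := by
    rw [show (1 : ℂ) - (α : ℂ) = (((1 - α : ℝ)) : ℂ) by push_cast; ring,
      Complex.norm_real, Real.norm_of_nonneg (by linarith)]
  rw [h1a]
  have hstep : (1 - α) * ‖s - 1‖ < 1 - α := by
    calc (1 - α) * ‖s - 1‖ ≤ (1 - α) * ‖z‖ := by
          apply mul_le_mul_of_nonneg_left hsm1 (by linarith)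
      _ < 1 - α := by nlinarith [norm_nonneg z]
  have hα : 1 - α ≤ ((n : ℝ) - 1) / ((n : ℝ) + 1) := by
    rw [div_le_iff₀ (by linarith : (0:ℝ) < (n:ℝ) + 1)] at hα1
    rw [le_div_iff₀ (by linarith : (0:ℝ) < (n:ℝ) + 1)]
    nlinarith
  linarith
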